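/- Let C, D > 0 and a > 0 with C·a⁵ < 6D. Then ∫₀^a (D/x − (C/6)x⁴)^{−1/2} dx = (2/(3√D))·a^{3/2}·∑_{n=0}^∞ [(1/2)_n·(3/10)_n / ((13/10)_n·n!)]·(C·a⁵/(6D))ⁿ, where (q)_n denotes the ascending Pochhammer symbol q(q+1)⋯(q+n−1), the series on the right converging absolutely. (This is the Gauss hypergeometric expression t + t₀ = (2/(3√D))a^{3/2}·₂F₁(1/2, 3/10; 13/10; (C/(6D))a⁵) for the scale factor in a matter-dominated universe.) -/

import Mathlib

open Real MeasureTheory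

namespace MDHaux


lemma poch_pos {q : ℝ} (hq : 0 < q) (n : ℕ) : 0 < (ascPochhammer ℝ n).eval q := by
  induction n with
  | zero => simp
  | succ n ih =>
      rw [ascPochhammer_succ_eval]
      exact mul_pos ih (by positivity)

noncomputable def c (n : ℕ) : ℝ := (ascPochhammer ℝ n).eval (1/2 : ℝ) / n.factorial

lemma c_zero : c 0 = 1 := by simp [c]

lemma c_pos (n : ℕ) : 0 < c n :=
  div_pos (poch_pos one_half_pos n) (by exact_mod_cast n.factorial_pos)

lemma c_succ (n : ℕ) : c (n + 1) = c n * (((n : ℝ) + 1/2) / ((n : ℝ) + 1)) := by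
  unfold c
  rw [ascPochhammer_succ_eval, Nat.factorial_succ]
  have h1 : (n.factorial : ℝ) ≠ 0 := by exact_mod_cast n.factorial_ne_zero
  have h2 : ((n : ℝ) + 1) ≠ 0 := by positivity
  push_cast
  field_simp
  ring

lemma c_le_one (n : ℕ) : c n ≤ 1 := by
  induction n with
  | zero => simp [c]
  | succ n ih =>
      rw [c_succ]
      have h2 : ((n : ℝ) + 1/2) / ((n : ℝ) + 1) ≤ 1 := by
        rw [div_le_one (by positivity)]; linarith
      calc c n * (((n : ℝ) + 1/2) / ((n : ℝ) + 1)) ≤ 1 * 1 :=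
            mul_le_mul ih h2 (by positivity) one_pos.le
        _ = 1 := one_mul 1

lemma poch_ratio (n : ℕ) :
    (ascPochhammer ℝ n).eval (3/10 : ℝ) / (ascPochhammer ℝ n).eval (13/10 : ℝ)
      = 3 / (10 * (n : ℝ) + 3) := by
  induction n with
  | zero => norm_num
  | succ n ih =>
      rw [ascPochhammer_succ_eval, ascPochhammer_succ_eval]
      have h1 := poch_pos (show (0:ℝ) < 3/10 by norm_num) n
      have h2 := poch_pos (show (0:ℝ) < 13/10 by norm_num) n
      have h3 : ((13:ℝ)/10 + n) ≠ 0 := by positivity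
      have h4 : (10 * (n : ℝ) + 3) ≠ 0 := by positivity
      rw [mul_div_mul_comm, ih]
      push_cast
      field_simp
      ring


lemma c_succ_mul (n : ℕ) : c (n + 1) * ((n : ℝ) + 1) = c n * ((n : ℝ) + 1/2) := by
  rw [c_succ]
  have : ((n : ℝ) + 1) ≠ 0 := by positivity
  field_simp

set_option maxHeartbeats 1000000 in
lemma hasSum_binom {z : ℝ} (h0 : 0 ≤ z) (h1 : z < 1) :
    HasSum (fun n => c n * z ^ n) ((1 - z) ^ (-(1:ℝ)/2)) := by
  set r : ℝ := (1 + z) / 2 with hr_def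
  have hr0 : 0 < r := by simp only [hr_def]; linarith
  have hrz : z < r := by simp only [hr_def]; linarith
  have hr1 : r < 1 := by simp only [hr_def]; linarith
  have hrnorm : ‖r‖ < 1 := by rwa [Real.norm_eq_abs, abs_of_pos hr0]
  set t : Set ℝ := Set.Ioo (-r) r with ht_def
  have ht_open : IsOpen t := isOpen_Ioo
  have ht_conn : IsPreconnected t := (convex_Ioo _ _).isPreconnected
  -- bound series
  set u : ℕ → ℝ := fun n => (n : ℝ) * r ^ (n - 1) with hu_def
  have hu : Summable u := by
    have h := (summable_pow_mul_geometric_of_norm_lt_one 1 hrnorm).mul_right r⁻¹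
    refine h.congr fun n => ?_
    cases n with
    | zero => simp [hu_def]
    | succ m =>
        simp only [hu_def, pow_one, Nat.add_sub_cancel]
        field_simp
        rw [pow_succ]
        ring
  -- derivative of each term
  have hg : ∀ (n : ℕ) (y : ℝ), y ∈ t →
      HasDerivAt (fun u => c n * u ^ n) (c n * ((n : ℝ) * y ^ (n - 1))) y :=
    fun n y _ => (hasDerivAt_pow n y).const_mul (c n)
  have habs : ∀ (n : ℕ) (y : ℝ), y ∈ t → ‖c n * ((n : ℝ) * y ^ (n - 1))‖ ≤ u n := by
    intro n y hy
    have hyr : |y| ≤ r := by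
      rw [abs_le]; exact ⟨hy.1.le, hy.2.le⟩
    have h1 : |y| ^ (n - 1) ≤ r ^ (n - 1) := pow_le_pow_left₀ (abs_nonneg y) hyr _
    have heq : ‖c n * ((n : ℝ) * y ^ (n - 1))‖ = c n * ((n : ℝ) * |y| ^ (n - 1)) := by
      rw [norm_mul, norm_mul, norm_pow]
      simp [Real.norm_eq_abs, abs_of_pos (c_pos n), Nat.abs_cast]
    rw [heq]
    calc c n * ((n : ℝ) * |y| ^ (n-1)) ≤ 1 * ((n:ℝ) * r ^ (n-1)) :=
          mul_le_mul (c_le_one n) (mul_le_mul_of_nonneg_left h1 (Nat.cast_nonneg n))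
            (by positivity) one_pos.le
      _ = u n := one_mul _
  have h0t : (0 : ℝ) ∈ t := ⟨by linarith, hr0⟩
  have hzt : z ∈ t := ⟨by linarith, hrz⟩
  have hg0 : Summable fun n => c n * (0:ℝ) ^ n := by
    apply summable_of_ne_finset_zero (s := {0})
    intro n hn
    have : n ≠ 0 := by simpa using hn
    simp [zero_pow this]
  -- summability everywhere in t
  have hsum : ∀ y ∈ t, Summable fun n => c n * y ^ n := fun y hy =>
    summable_of_summable_hasDerivAt_of_isPreconnected hu ht_open ht_conn hg habs h0t hg0 hy
  set S : ℝ → ℝ := fun y => ∑' n, c n * y ^ n with hS_def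
  have hderivS : ∀ y ∈ t, HasDerivAt S (∑' n, c n * ((n : ℝ) * y ^ (n - 1))) y := fun y hy =>
    hasDerivAt_tsum_of_isPreconnected hu ht_open ht_conn hg habs h0t hg0 hy
  -- the key algebraic identity : S y = 2 * (1 - y) * T y
  have key : ∀ y ∈ t, S y = 2 * (1 - y) * (∑' n, c n * ((n : ℝ) * y ^ (n - 1))) := by
    intro y hy
    set T : ℝ := ∑' n, c n * ((n : ℝ) * y ^ (n - 1)) with hT_def
    have hTsummable : Summable fun n => c n * ((n : ℝ) * y ^ (n - 1)) :=
      Summable.of_norm_bounded hu (fun n => habs n y hy)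
    have hT : HasSum (fun n => c n * ((n : ℝ) * y ^ (n - 1))) T := hTsummable.hasSum
    -- shifted : HasSum (fun n => e n * y^n) T  with e n = c n * (n + 1/2)
    have hE : HasSum (fun n => c n * ((n : ℝ) + 1/2) * y ^ n) T := by
      have := (hasSum_nat_add_iff (f := fun n => c n * ((n : ℝ) * y ^ (n - 1))) 1 (g := T)).2 ?_
      · refine this.congr_fun fun n => ?_
        have h2 := c_succ_mul n
        simp only [Nat.add_sub_cancel]
        push_cast
        calc c n * ((n:ℝ) + 1/2) * y^n = (c n * ((n:ℝ) + 1/2)) * y^n := by ring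
          _ = (c (n+1) * ((n:ℝ)+1)) * y^n := by rw [h2]
          _ = c (n+1) * (((n:ℝ) + 1) * y ^ n) := by ring
      · simpa using hT
    have hQ : HasSum (fun n => 2 * (c n * ((n : ℝ) + 1/2)) * y ^ n) (2 * T) := by
      have := hE.mul_left 2
      refine this.congr_fun fun n => by ring
    have hP : HasSum (fun n => 2 * (c n * ((n : ℝ) + 1/2)) * y ^ n * y) (2 * T * y) :=
      hQ.mul_right y
    have hQ0 : 2 * (c 0 * ((0 : ℝ) + 1/2)) * y ^ 0 = 1 := by
      rw [c_zero]; norm_num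
    have hshift : HasSum (fun n => 2 * (c (n+1) * (((n:ℝ)+1) + 1/2)) * y ^ (n+1))
        (2 * T - 1) := by
      have h3 : HasSum (fun n => 2 * (c n * ((n : ℝ) + 1/2)) * y ^ n)
          ((2 * T - 1) + ∑ i ∈ Finset.range 1, 2 * (c i * ((i : ℝ) + 1/2)) * y ^ i) := by
        have heq2 : (2 * T - 1) + ∑ i ∈ Finset.range 1, 2 * (c i * ((i : ℝ) + 1/2)) * y ^ i
            = 2 * T := by
          rw [Finset.sum_range_one]
          norm_num [c_zero]
        rw [heq2]
        exact hQ
      have h4 := (hasSum_nat_add_iff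
        (f := fun n => 2 * (c n * ((n : ℝ) + 1/2)) * y ^ n) 1 (g := 2 * T - 1)).2 h3
      exact h4.congr_fun fun n => by push_cast; ring
    have hsub : HasSum (fun n => 2 * (c (n+1) * (((n:ℝ)+1) + 1/2)) * y ^ (n+1)
        - 2 * (c n * ((n : ℝ) + 1/2)) * y ^ n * y) ((2 * T - 1) - 2 * T * y) :=
      hshift.sub hP
    have hterm : ∀ n : ℕ, 2 * (c (n+1) * (((n:ℝ)+1) + 1/2)) * y ^ (n+1)
        - 2 * (c n * ((n : ℝ) + 1/2)) * y ^ n * y = c (n+1) * y ^ (n+1) := by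
      intro n
      have h2 := c_succ_mul n
      have : c n * ((n : ℝ) + 1/2) = c (n+1) * ((n : ℝ) + 1) := h2.symm
      rw [this, pow_succ]
      ring
    have hsub' : HasSum (fun n => c (n+1) * y ^ (n+1)) ((2 * T - 1) - 2 * T * y) :=
      hsub.congr_fun fun n => (hterm n).symm
    have hfull : HasSum (fun n => c n * y ^ n)
        (((2 * T - 1) - 2 * T * y) + ∑ i ∈ Finset.range 1, c i * y ^ i) :=
      (hasSum_nat_add_iff (f := fun n => c n * y ^ n) 1
        (g := (2 * T - 1) - 2 * T * y)).1 hsub'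
    have hts := hfull.tsum_eq
    simp only [Finset.range_one, Finset.sum_singleton, c_zero, pow_zero, mul_one] at hts
    show (∑' n : ℕ, c n * y ^ n) = 2 * (1 - y) * T
    rw [hts]; ring
  -- h y := S y * (1-y)^(1/2) has zero derivative on t
  have hw : ∀ y ∈ t, (0:ℝ) < 1 - y := fun y hy => by linarith [hy.2, hr1]
  set h : ℝ → ℝ := fun y => S y * (1 - y) ^ ((1:ℝ)/2) with hh_def
  have hderivh : ∀ y ∈ t, HasDerivAt h 0 y := by
    intro y hy
    have hwy := hw y hy
    have hrpow : HasDerivAt (fun u : ℝ => (1 - u) ^ ((1:ℝ)/2))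
        (((1:ℝ)/2) * (1 - y) ^ ((1:ℝ)/2 - 1) * (-1)) y := by
      have hbase : HasDerivAt (fun u : ℝ => 1 - u) (-1) y := by
        simpa using (hasDerivAt_id y).const_sub 1
      exact (Real.hasDerivAt_rpow_const (p := (1:ℝ)/2) (Or.inl hwy.ne')).comp y hbase
    have hmul := ((hderivS y hy).mul hrpow)
    refine (hmul.congr_deriv ?_ : HasDerivAt h 0 y)
    set T : ℝ := ∑' n, c n * ((n : ℝ) * y ^ (n - 1)) with hT_def
    have hSy : S y = 2 * (1 - y) * T := key y hy
    rw [hSy]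
    have e1 : (1 - y) ^ ((1:ℝ)/2 - 1) = (1 - y) ^ (-(1:ℝ)/2) := by norm_num
    have e2 : (1 - y) * (1 - y) ^ (-(1:ℝ)/2) = (1 - y) ^ ((1:ℝ)/2) := by
      nth_rewrite 1 [← Real.rpow_one (1 - y)]
      rw [← Real.rpow_add hwy]
      norm_num
    rw [e1]
    linear_combination (-(T : ℝ)) * e2
  -- constancy on [0, z]
  have hconst : h z = h 0 := by
    have hsubset : Set.Icc (0:ℝ) z ⊆ t := fun x hx =>
      ⟨by linarith [hx.1], by linarith [hx.2]⟩
    have hcont : ContinuousOn h (Set.Icc 0 z) := fun x hx =>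
      ((hderivh x (hsubset hx)).continuousAt).continuousWithinAt
    have := constant_of_has_deriv_right_zero hcont
      (fun x hx => (hderivh x (hsubset ⟨hx.1, hx.2.le⟩)).hasDerivWithinAt)
    exact this z ⟨h0, le_refl z⟩
  have hS0 : S 0 = 1 := by
    show (∑' n : ℕ, c n * (0:ℝ) ^ n) = 1
    rw [tsum_eq_single 0 (fun n hn => by simp [zero_pow hn])]
    simp [c_zero]
  have hh0 : h 0 = 1 := by
    simp only [hh_def, hS0, sub_zero, Real.one_rpow, one_mul]
  have hSz : S z * (1 - z) ^ ((1:ℝ)/2) = 1 := by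
    have h5 := hconst
    rw [hh0] at h5
    exact h5
  have hwz : (0:ℝ) < 1 - z := by linarith
  have hSz' : S z = (1 - z) ^ (-(1:ℝ)/2) := by
    have hne : (1 - z) ^ ((1:ℝ)/2) ≠ 0 := (Real.rpow_pos_of_pos hwz _).ne'
    have h2 : S z = ((1 - z) ^ ((1:ℝ)/2))⁻¹ := by
      rw [inv_eq_one_div, eq_div_iff hne]
      exact hSz
    rw [h2, ← Real.rpow_neg hwz.le]
    norm_num
  rw [← hSz']
  exact (hsum z hzt).hasSum


lemma integral_rpow_Ioc {a r : ℝ} (ha : 0 < a) (hr : -1 < r) :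
    ∫ x in Set.Ioc (0:ℝ) a, x ^ r = a ^ (r + 1) / (r + 1) := by
  rw [← intervalIntegral.integral_of_le ha.le, integral_rpow (Or.inl hr),
    Real.zero_rpow (by linarith)]
  ring

lemma b_eq (n : ℕ) :
    (ascPochhammer ℝ n).eval (1/2 : ℝ) * (ascPochhammer ℝ n).eval (3/10 : ℝ)
      / ((ascPochhammer ℝ n).eval (13/10 : ℝ) * (n.factorial : ℝ))
    = c n * (3 / (10 * (n : ℝ) + 3)) := by
  rw [mul_comm ((ascPochhammer ℝ n).eval (13/10 : ℝ)) (n.factorial : ℝ),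
    mul_div_mul_comm, poch_ratio]
  rfl


end MDHaux

open MDHaux in
/-- In a matter-dominated universe in Conformal Killing gravity (`w = 0`, `R⋆ = 0`, `Λ = 0`),
the time integral `∫₀^a (D/x - (C/6)x⁴)^{-1/2} dx` equals the Gauss hypergeometric expression
`(2/(3√D)) a^{3/2} ₂F₁(1/2, 3/10; 13/10; C a⁵/(6D))`, the hypergeometric series converging
absolutely. Here `(q)_n` is the ascending Pochhammer symbol. -/
theorem matter_dominated_hypergeometric
    (C D a : ℝ) (hC : C > 0) (hD : D > 0) (ha : a > 0) (hlt : C * a ^ 5 < 6 * D) :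
    Summable (fun n : ℕ =>
      |((ascPochhammer ℝ n).eval (1/2 : ℝ) * (ascPochhammer ℝ n).eval (3/10 : ℝ)
          / ((ascPochhammer ℝ n).eval (13/10 : ℝ) * (n.factorial : ℝ)))
        * (C * a ^ 5 / (6 * D)) ^ n|) ∧
    (∫ x in (0:ℝ)..a, (D / x - (C/6) * x ^ 4) ^ (-(1:ℝ)/2))
      = (2 / (3 * Real.sqrt D)) * a ^ ((3:ℝ)/2)
        * ∑' n : ℕ,
          ((ascPochhammer ℝ n).eval (1/2 : ℝ) * (ascPochhammer ℝ n).eval (3/10 : ℝ)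
              / ((ascPochhammer ℝ n).eval (13/10 : ℝ) * (n.factorial : ℝ)))
            * (C * a ^ 5 / (6 * D)) ^ n := by
  have hD6 : (0:ℝ) < 6 * D := by linarith
  set z : ℝ := C * a ^ 5 / (6 * D) with hz_def
  have hz0 : 0 < z := by positivity
  have hz1 : z < 1 := (div_lt_one hD6).2 hlt
  set k : ℝ := C / (6 * D) with hk_def
  have hk0 : 0 < k := by positivity
  have hzk : z = k * a ^ 5 := by rw [hz_def, hk_def]; ring
  have hsqD : (0:ℝ) < Real.sqrt D := Real.sqrt_pos.2 hD
  have hn0 : ∀ n : ℕ, (0:ℝ) ≤ (n:ℝ) := fun n => Nat.cast_nonneg n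
  -- coefficient bound
  have hb_le : ∀ n : ℕ, c n * (3 / (10 * (n : ℝ) + 3)) ≤ 1 := by
    intro n
    have h1 : (3:ℝ) / (10 * (n : ℝ) + 3) ≤ 1 := by
      rw [div_le_one (by positivity)]
      linarith [hn0 n]
    have h2 : (0:ℝ) ≤ 3 / (10 * (n : ℝ) + 3) := by positivity
    calc c n * (3 / (10 * (n : ℝ) + 3)) ≤ 1 * 1 :=
          mul_le_mul (c_le_one n) h1 h2 one_pos.le
      _ = 1 := one_mul 1
  -- Part 1 : summability
  have hsummable : Summable (fun n : ℕ =>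
      |((ascPochhammer ℝ n).eval (1/2 : ℝ) * (ascPochhammer ℝ n).eval (3/10 : ℝ)
          / ((ascPochhammer ℝ n).eval (13/10 : ℝ) * (n.factorial : ℝ))) * z ^ n|) := by
    refine Summable.of_nonneg_of_le (fun n => abs_nonneg _) (fun n => ?_)
      (summable_geometric_of_lt_one hz0.le hz1)
    rw [b_eq n, abs_of_nonneg (mul_nonneg (mul_nonneg (c_pos n).le (by positivity))
      (pow_nonneg hz0.le n))]
    calc c n * (3 / (10 * (n : ℝ) + 3)) * z ^ n ≤ 1 * z ^ n :=
          mul_le_mul_of_nonneg_right (hb_le n) (pow_nonneg hz0.le n)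
      _ = z ^ n := one_mul _
  refine ⟨hsummable, ?_⟩
  -- the power identity
  have hpow : ∀ (x : ℝ), 0 < x → ∀ n : ℕ, x ^ (5*(n:ℝ) + 1/2) = (x^5)^n * x ^ ((1:ℝ)/2) := by
    intro x hx n
    rw [Real.rpow_add hx, show (5*(n:ℝ)) = ((5*n : ℕ) : ℝ) by push_cast; ring,
      Real.rpow_natCast, pow_mul]
  -- the summand functions
  set G : ℕ → ℝ → ℝ := fun n x => (c n * k ^ n / Real.sqrt D) * x ^ (5*(n:ℝ) + 1/2)
    with hG_def
  -- pointwise expansion on Ioc 0 a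
  have hpointwise : ∀ x ∈ Set.Ioc (0:ℝ) a,
      (D / x - (C/6) * x ^ 4) ^ (-(1:ℝ)/2) = ∑' n : ℕ, G n x := by
    intro x hx
    have hx0 : 0 < x := hx.1
    have hxa : x ≤ a := hx.2
    have hkx0 : 0 ≤ k * x ^ 5 := by positivity
    have hkx1 : k * x ^ 5 < 1 := by
      have h5 : x ^ 5 ≤ a ^ 5 := pow_le_pow_left₀ hx0.le hxa 5
      calc k * x ^ 5 ≤ k * a ^ 5 := mul_le_mul_of_nonneg_left h5 hk0.le
        _ = z := hzk.symm
        _ < 1 := hz1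
    have hfac : D / x - (C/6) * x ^ 4 = (D / x) * (1 - k * x ^ 5) := by
      rw [hk_def]
      field_simp
    have h1mk : (0:ℝ) < 1 - k * x ^ 5 := by linarith
    have hDx : (0:ℝ) ≤ D / x := by positivity
    rw [hfac, Real.mul_rpow hDx h1mk.le]
    have hDxr : (D / x) ^ (-(1:ℝ)/2) = x ^ ((1:ℝ)/2) / Real.sqrt D := by
      rw [show (-(1:ℝ)/2) = -((1:ℝ)/2) by ring, Real.rpow_neg hDx,
        Real.div_rpow hD.le hx0.le, inv_div, Real.sqrt_eq_rpow]
    rw [hDxr, ← (hasSum_binom hkx0 hkx1).tsum_eq, ← tsum_mul_left]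
    refine tsum_congr fun n => ?_
    rw [hG_def]
    simp only
    rw [hpow x hx0 n, mul_pow]
    ring
  -- integrability of each G n
  have hint : ∀ n : ℕ, IntegrableOn (G n) (Set.Ioc (0:ℝ) a) volume := by
    intro n
    have h1 : IntervalIntegrable (fun x : ℝ => x ^ (5*(n:ℝ) + 1/2)) volume 0 a := by
      apply intervalIntegral.intervalIntegrable_rpow (Or.inl (by linarith [hn0 n]))
    have h2 := (h1.const_mul (c n * k ^ n / Real.sqrt D))
    rw [intervalIntegrable_iff_integrableOn_Ioc_of_le ha.le] at h2
    exact h2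
  -- value of each norm-integral
  have hval : ∀ n : ℕ, (∫ x in Set.Ioc (0:ℝ) a, ‖G n x‖)
      = (c n * k ^ n / Real.sqrt D) * (a ^ (5*(n:ℝ) + 1/2 + 1) / (5*(n:ℝ) + 1/2 + 1)) := by
    intro n
    have heq : ∀ x ∈ Set.Ioc (0:ℝ) a, ‖G n x‖ = G n x := by
      intro x hx
      rw [Real.norm_eq_abs, abs_of_nonneg]
      exact mul_nonneg (div_nonneg (mul_nonneg (c_pos n).le (pow_nonneg hk0.le n)) hsqD.le)
        (Real.rpow_nonneg hx.1.le _)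
    rw [setIntegral_congr_fun measurableSet_Ioc heq, hG_def]
    simp only
    rw [MeasureTheory.integral_const_mul, integral_rpow_Ioc ha (by linarith [hn0 n])]
  have hpow2 : ∀ n : ℕ, a ^ (5*(n:ℝ) + 1/2 + 1) = (a^5)^n * a ^ ((3:ℝ)/2) := by
    intro n
    rw [show (5*(n:ℝ) + 1/2 + 1) = (5*(n:ℝ) + 3/2) by ring,
      Real.rpow_add ha, show (5*(n:ℝ)) = ((5*n : ℕ) : ℝ) by push_cast; ring,
      Real.rpow_natCast, pow_mul]
  -- swap integral and sum
  have hswap : (∫ x in Set.Ioc (0:ℝ) a, ∑' n : ℕ, G n x)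
      = ∑' n : ℕ, ∫ x in Set.Ioc (0:ℝ) a, G n x := by
    refine (integral_tsum_of_summable_integral_norm hint ?_).symm
    refine Summable.of_nonneg_of_le
      (fun n => integral_nonneg_of_ae (Filter.Eventually.of_forall fun x => norm_nonneg _))
      (fun n => ?_)
      (((summable_geometric_of_lt_one hz0.le hz1).mul_left (a ^ ((3:ℝ)/2) / Real.sqrt D)))
    rw [hval n]
    rw [hpow2 n]
    have hd : (1:ℝ) ≤ 5*(n:ℝ) + 1/2 + 1 := by linarith [hn0 n]
    calc (c n * k ^ n / Real.sqrt D) * ((a^5)^n * a ^ ((3:ℝ)/2) / (5*(n:ℝ) + 1/2 + 1))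
        = (a ^ ((3:ℝ)/2) / Real.sqrt D) * (k * a^5) ^ n * (c n / (5*(n:ℝ) + 1/2 + 1)) := by
          rw [mul_pow]; ring
      _ ≤ (a ^ ((3:ℝ)/2) / Real.sqrt D) * (k * a^5) ^ n * 1 := by
          refine mul_le_mul_of_nonneg_left ?_
            (mul_nonneg (by positivity) (pow_nonneg (by positivity) n))
          rw [div_le_one (by linarith)]
          linarith [c_le_one n]
      _ = a ^ ((3:ℝ)/2) / Real.sqrt D * (k * a^5) ^ n := mul_one _
      _ = a ^ ((3:ℝ)/2) / Real.sqrt D * z ^ n := by rw [← hzk]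
  -- putting the integral together
  have hmain : (∫ x in (0:ℝ)..a, (D / x - (C/6) * x ^ 4) ^ (-(1:ℝ)/2))
      = ∑' n : ℕ, (c n * k ^ n / Real.sqrt D) * (a ^ (5*(n:ℝ) + 1/2 + 1) / (5*(n:ℝ) + 1/2 + 1)) := by
    rw [intervalIntegral.integral_of_le ha.le,
      setIntegral_congr_fun measurableSet_Ioc hpointwise, hswap]
    refine tsum_congr fun n => ?_
    have heq : ∀ x ∈ Set.Ioc (0:ℝ) a, G n x
        = (c n * k ^ n / Real.sqrt D) * x ^ (5*(n:ℝ) + 1/2) := fun x hx => rfl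
    rw [setIntegral_congr_fun measurableSet_Ioc heq, MeasureTheory.integral_const_mul,
      integral_rpow_Ioc ha (by linarith [hn0 n])]
  rw [hmain]
  -- final algebra
  rw [show (2 / (3 * Real.sqrt D) * a ^ ((3:ℝ)/2)
      * ∑' n : ℕ, ((ascPochhammer ℝ n).eval (1/2 : ℝ) * (ascPochhammer ℝ n).eval (3/10 : ℝ)
          / ((ascPochhammer ℝ n).eval (13/10 : ℝ) * (n.factorial : ℝ))) * z ^ n)
      = ∑' n : ℕ, (2 / (3 * Real.sqrt D) * a ^ ((3:ℝ)/2))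
          * (((ascPochhammer ℝ n).eval (1/2 : ℝ) * (ascPochhammer ℝ n).eval (3/10 : ℝ)
          / ((ascPochhammer ℝ n).eval (13/10 : ℝ) * (n.factorial : ℝ))) * z ^ n)
      from (tsum_mul_left).symm]
  refine tsum_congr fun n => ?_
  rw [b_eq n, hzk, mul_pow, hpow2 n]
  have h10 : (10 * (n:ℝ) + 3) ≠ 0 := by positivity
  have h52 : (5*(n:ℝ) + 1/2 + 1) ≠ 0 := by positivity
  field_simp
  ring
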